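/- Suppose there are sequences kₙ ∈ [0,1) and εₙ ≥ 0 with εₙ/(1−kₙ) → 0 such that d(Tⁿx,Tⁿy)² ≤ kₙ·d(x,y)² + (1−kₙ)·D² + εₙ for all (x,y) ∈ (A×B) ∪ (B×A) and all n. Then lim_{n→∞} d(T^{2n}x, T^{2n+2}x) = 0 and lim_{n→∞} d(T^{2n+1}x, T^{2n+3}x) = 0 for every x ∈ A∪B. (Theorem 3.3(ii), first part.) -/

import Mathlib

open Filter Topology

lemma ucv_aux {X : Type*} [NormedAddCommGroup X] [NormedSpace ℝ X]
    [UniformConvexSpace X] {D : ℝ} (hD : 0 ≤ D) {p q : ℕ → X}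
    (hp : Tendsto (fun n => ‖p n‖) atTop (nhds D))
    (hq : Tendsto (fun n => ‖q n‖) atTop (nhds D))
    (hpq : ∀ n, 2 * D ≤ ‖p n + q n‖) :
    Tendsto (fun n => ‖p n - q n‖) atTop (nhds 0) := by
  rcases hD.eq_or_lt with h0 | hDpos
  · have hsum : Tendsto (fun n => ‖p n‖ + ‖q n‖) atTop (nhds 0) := by
      simpa [← h0] using hp.add hq
    exact squeeze_zero (fun n => norm_nonneg _) (fun n => norm_sub_le _ _) hsum
  · rw [Metric.tendsto_atTop]
    intro e he
    have he1 : 0 < e / (2 * D + 1) := by positivity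
    obtain ⟨δ₀, hδ₀, hball⟩ :=
      exists_forall_closed_ball_dist_add_le_two_sub X he1
    set δ : ℝ := min δ₀ 1 with hδdef
    have hδpos : 0 < δ := lt_min hδ₀ one_pos
    have hδ1 : δ ≤ 1 := min_le_right _ _
    have hδδ₀ : δ ≤ δ₀ := min_le_left _ _
    set r : ℝ := D * (1 + δ / 8) with hrdef
    have hrD : D < r := by nlinarith
    have hrpos : 0 < r := hD.trans_lt hrD
    have hpev : ∀ᶠ n in atTop, ‖p n‖ < r := hp.eventually_lt_const hrD
    have hqev : ∀ᶠ n in atTop, ‖q n‖ < r := hq.eventually_lt_const hrD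
    obtain ⟨N, hN⟩ := (hpev.and hqev).exists_forall_of_atTop
    refine ⟨N, fun n hn => ?_⟩
    obtain ⟨hpn, hqn⟩ := hN n hn
    set u : X := r⁻¹ • p n with hu_def
    set v : X := r⁻¹ • q n with hv_def
    have hinv : (0:ℝ) < r⁻¹ := inv_pos.2 hrpos
    have hu : ‖u‖ ≤ 1 := by
      rw [hu_def, norm_smul, Real.norm_eq_abs, abs_of_pos hinv, inv_mul_le_iff₀ hrpos]
      simpa using hpn.le
    have hv : ‖v‖ ≤ 1 := by
      rw [hv_def, norm_smul, Real.norm_eq_abs, abs_of_pos hinv, inv_mul_le_iff₀ hrpos]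
      simpa using hqn.le
    have hsumeq : ‖p n + q n‖ = r * ‖u + v‖ := by
      rw [hu_def, hv_def, ← smul_add, norm_smul, Real.norm_eq_abs, abs_of_pos hinv]
      field_simp
    have hdiffeq : ‖p n - q n‖ = r * ‖u - v‖ := by
      rw [hu_def, hv_def, ← smul_sub, norm_smul, Real.norm_eq_abs, abs_of_pos hinv]
      field_simp
    have huv : ‖u - v‖ < e / (2 * D + 1) := by
      by_contra hcon
      push_neg at hcon
      have h2 : ‖u + v‖ ≤ 2 - δ₀ := hball hu hv hcon
      have h4 : 2 * D ≤ r * ‖u + v‖ := (hpq n).trans_eq hsumeq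
      nlinarith [mul_le_mul_of_nonneg_left h2 hrpos.le]
    have hrlt : r < 2 * D + 1 := by nlinarith
    have hfinal : ‖p n - q n‖ < e := by
      rw [hdiffeq]
      have h5 : r * ‖u - v‖ < r * (e / (2 * D + 1)) :=
        mul_lt_mul_of_pos_left huv hrpos
      have h6 : e = (2 * D + 1) * (e / (2 * D + 1)) := by field_simp
      nlinarith [mul_lt_mul_of_pos_right hrlt he1]
    simpa [abs_of_nonneg (norm_nonneg _)] using hfinal

lemma main_aux {X : Type*} [NormedAddCommGroup X] [NormedSpace ℝ X]
    [UniformConvexSpace X]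
    (A B : Set X) (hAconv : Convex ℝ A) (hBconv : Convex ℝ B)
    (T : X → X) (hTA : Set.MapsTo T A B) (hTB : Set.MapsTo T B A)
    (D : ℝ) (hD0 : 0 ≤ D) (hDle : ∀ a ∈ A, ∀ b ∈ B, D ≤ dist a b)
    (k ε : ℕ → ℝ)
    (hk : ∀ n, 0 ≤ k n ∧ k n < 1) (hε : ∀ n, 0 ≤ ε n)
    (hke : Tendsto (fun n => ε n / (1 - k n)) atTop (nhds 0))
    (hineq : ∀ n x y, (x ∈ A ∧ y ∈ B) ∨ (x ∈ B ∧ y ∈ A) →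
      dist (T^[n] x) (T^[n] y) ^ 2 ≤
        k n * dist x y ^ 2 + (1 - k n) * D ^ 2 + ε n)
    (x : X) (hx : x ∈ A) :
    Tendsto (fun m => dist (T^[m] x) (T^[m + 2] x)) atTop (nhds 0) := by
  set z : ℕ → X := fun m => T^[m] x with hz
  -- parity membership
  have key : ∀ m, (Even m → z m ∈ A) ∧ (Odd m → z m ∈ B) := by
    intro m
    induction m with
    | zero => exact ⟨fun _ => hx, fun h => absurd h (by simp)⟩
    | succ n ih =>
      have hzs : z (n + 1) = T (z n) := Function.iterate_succ_apply' T n x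
      constructor
      · intro h
        rw [Nat.even_add_one] at h
        rw [hzs]
        exact hTB (ih.2 (Nat.odd_iff.2 (Nat.not_even_iff.1 h)))
      · intro h
        rw [Nat.odd_add_one] at h
        rw [hzs]
        exact hTA (ih.1 (Nat.not_odd_iff_even.mp h))
  have hside : ∀ m, (z m ∈ A ∧ z (m + 1) ∈ B ∧ z (m + 2) ∈ A) ∨
      (z m ∈ B ∧ z (m + 1) ∈ A ∧ z (m + 2) ∈ B) := by
    intro m
    rcases Nat.even_or_odd m with h | h
    · exact Or.inl ⟨(key m).1 h, (key (m+1)).2 (Even.add_one h),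
        (key (m+2)).1 (by simpa using h.add (even_iff_two_dvd.mpr ⟨1, rfl⟩))⟩
    · exact Or.inr ⟨(key m).2 h, (key (m+1)).1 h.add_one,
        (key (m+2)).2 (by rcases h with ⟨j, hj⟩; exact ⟨j+1, by omega⟩)⟩
  have hDd : ∀ m, D ≤ dist (z m) (z (m + 1)) := by
    intro m
    rcases hside m with ⟨h1, h2, _⟩ | ⟨h1, h2, _⟩
    · exact hDle _ h1 _ h2
    · rw [dist_comm]; exact hDle _ h2 _ h1
  set a : ℕ → ℝ := fun m => dist (z m) (z (m + 1)) ^ 2 - D ^ 2 with ha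
  have ha0 : ∀ m, 0 ≤ a m := by
    intro m
    have := pow_le_pow_left₀ hD0 (hDd m) 2
    simp only [ha]
    linarith
  have hrec : ∀ n m, a (n + m) ≤ k n * a m + ε n := by
    intro n m
    have hmem : (z m ∈ A ∧ z (m + 1) ∈ B) ∨ (z m ∈ B ∧ z (m + 1) ∈ A) := by
      rcases hside m with ⟨h1, h2, _⟩ | ⟨h1, h2, _⟩
      · exact Or.inl ⟨h1, h2⟩
      · exact Or.inr ⟨h1, h2⟩
    have h1 := hineq n (z m) (z (m + 1)) hmem
    have he1 : T^[n] (z m) = z (n + m) := (Function.iterate_add_apply T n m x).symm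
    have he2 : T^[n] (z (m + 1)) = z (n + m + 1) := by
      rw [hz]
      rw [← Function.iterate_add_apply]
      rfl
    rw [he1, he2] at h1
    simp only [ha]
    linarith
  -- bound on ε n / (1 - k n)
  obtain ⟨E, hE⟩ := hke.bddAbove_range
  have hEb : ∀ n, ε n / (1 - k n) ≤ E := fun n => hE ⟨n, rfl⟩
  have hkpos : ∀ n, (0:ℝ) < 1 - k n := fun n => by linarith [(hk n).2]
  have hE0 : 0 ≤ E := le_trans (div_nonneg (hε 0) (hkpos 0).le) (hEb 0)
  have hεE : ∀ n, ε n ≤ E := by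
    intro n
    have h1 : ε n ≤ ε n / (1 - k n) := by
      rw [le_div_iff₀ (hkpos n)]
      nlinarith [hε n, (hk n).1]
    exact h1.trans (hEb n)
  set C : ℝ := a 0 + E with hC
  have hC0 : 0 ≤ C := add_nonneg (ha0 0) hE0
  have haC : ∀ m, a m ≤ C := by
    intro m
    have h1 : a (m + 0) ≤ k m * a 0 + ε m := hrec m 0
    simp only [Nat.add_zero] at h1
    have := (hk m).1
    have := (hk m).2
    nlinarith [ha0 0, hεE m]
  -- a tends to 0
  have haT : Tendsto a atTop (nhds 0) := by
    rw [Metric.tendsto_atTop]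
    intro η hη
    have hη2 : 0 < η / 2 := by linarith
    obtain ⟨n₀, hn₀⟩ := (Metric.tendsto_atTop.1 hke) (η / 2) hη2
    have hn₀' : ε n₀ / (1 - k n₀) < η / 2 := by
      have := hn₀ n₀ le_rfl
      rwa [Real.dist_eq, sub_zero, abs_of_nonneg (div_nonneg (hε n₀) (hkpos n₀).le)] at this
    set kk := k n₀ with hkk
    set ee := ε n₀ with hee
    have hkk0 : 0 ≤ kk := (hk n₀).1
    have hkk1 : kk < 1 := (hk n₀).2
    have h1k : (0:ℝ) < 1 - kk := hkpos n₀
    have hiter : ∀ j m, a (j * n₀ + m) ≤ kk ^ j * C + ee / (1 - kk) := by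
      intro j
      induction j with
      | zero =>
        intro m
        simp only [Nat.zero_mul, Nat.zero_add, pow_zero, one_mul]
        have hee0 : 0 ≤ ee := hε n₀
        have h00 : 0 ≤ ee / (1 - kk) := div_nonneg hee0 h1k.le
        exact (haC m).trans (le_add_of_nonneg_right h00)
      | succ j ih =>
        intro m
        have heq : (j + 1) * n₀ + m = n₀ + (j * n₀ + m) := by ring
        rw [heq]
        have h2 := hrec n₀ (j * n₀ + m)
        have h3 := ih m
        have h4 : kk * (ee / (1 - kk)) + ee = ee / (1 - kk) := by
          field_simp
          ring
        calc a (n₀ + (j * n₀ + m)) ≤ kk * a (j * n₀ + m) + ee := h2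
          _ ≤ kk * (kk ^ j * C + ee / (1 - kk)) + ee := by nlinarith [ha0 (j * n₀ + m)]
          _ = kk ^ (j + 1) * C + (kk * (ee / (1 - kk)) + ee) := by ring
          _ = kk ^ (j + 1) * C + ee / (1 - kk) := by rw [h4]
    obtain ⟨J, hJ⟩ := exists_pow_lt_of_lt_one (show (0:ℝ) < η / 2 / (C + 1) by positivity) hkk1
    refine ⟨J * n₀, fun ℓ hℓ => ?_⟩
    have hdec : ℓ = J * n₀ + (ℓ - J * n₀) := by omega
    have h5 : a ℓ ≤ kk ^ J * C + ee / (1 - kk) := by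
      rw [hdec]; exact hiter J (ℓ - J * n₀)
    have h6 : kk ^ J * C < η / 2 := by
      have h7 : 0 ≤ kk ^ J := pow_nonneg hkk0 J
      have h8 : kk ^ J * (C + 1) < η / 2 := by
        rw [lt_div_iff₀ (show (0:ℝ) < C + 1 by linarith)] at hJ
        exact hJ
      nlinarith
    rw [Real.dist_eq, sub_zero, abs_of_nonneg (ha0 ℓ)]
    have h9 : a ℓ < η / 2 + η / 2 := lt_of_le_of_lt h5 (add_lt_add h6 hn₀')
    have h10 : η / 2 + η / 2 = η := by ring
    rw [h10] at h9
    exact h9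
  -- dist (z m) (z (m+1)) → D
  have hdistT : Tendsto (fun m => dist (z m) (z (m + 1))) atTop (nhds D) := by
    have h1 : Tendsto (fun m => dist (z m) (z (m + 1)) ^ 2) atTop (nhds (D ^ 2)) := by
      have := haT.add_const (D ^ 2)
      simp only [ha, sub_add_cancel, zero_add] at this
      exact this
    have h2 := (Real.continuous_sqrt.tendsto _).comp h1
    simp only [Function.comp_def, Real.sqrt_sq dist_nonneg, Real.sqrt_sq hD0] at h2
    exact h2
  -- apply uniform convexity
  set p : ℕ → X := fun m => z m - z (m + 1) with hp_def
  set q : ℕ → X := fun m => z (m + 2) - z (m + 1) with hq_def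
  have hpT : Tendsto (fun m => ‖p m‖) atTop (nhds D) := by
    simpa [hp_def, dist_eq_norm] using hdistT
  have hqT : Tendsto (fun m => ‖q m‖) atTop (nhds D) := by
    have h1 : Tendsto (fun m => dist (z (m + 1)) (z (m + 1 + 1))) atTop (nhds D) :=
      hdistT.comp (tendsto_add_atTop_nat 1)
    have h2 : (fun m => ‖q m‖) = fun m => dist (z (m + 1)) (z (m + 1 + 1)) := by
      funext m
      simp only [hq_def, ← dist_eq_norm]
      exact dist_comm _ _
    rw [h2]
    exact h1
  have hpqT : ∀ m, 2 * D ≤ ‖p m + q m‖ := by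
    intro m
    have hmid : ∀ s : Set X, Convex ℝ s → z m ∈ s → z (m + 2) ∈ s →
        ((1/2 : ℝ) • z m + (1/2 : ℝ) • z (m + 2)) ∈ s := by
      intro s hs h1 h2
      exact hs h1 h2 (by norm_num) (by norm_num) (by norm_num)
    have heq : p m + q m = (2:ℝ) • (((1/2 : ℝ) • z m + (1/2 : ℝ) • z (m + 2)) - z (m + 1)) := by
      simp only [hp_def, hq_def]
      module
    have hnorm : ‖p m + q m‖ =
        2 * ‖((1/2 : ℝ) • z m + (1/2 : ℝ) • z (m + 2)) - z (m + 1)‖ := by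
      rw [heq, norm_smul]
      norm_num
    rcases hside m with ⟨h1, h2, h3⟩ | ⟨h1, h2, h3⟩
    · have hm := hmid A hAconv h1 h3
      have := hDle _ hm _ h2
      rw [dist_eq_norm] at this
      rw [hnorm]
      linarith
    · have hm := hmid B hBconv h1 h3
      have := hDle _ h2 _ hm
      rw [dist_comm, dist_eq_norm] at this
      rw [hnorm]
      linarith
  have hfin := ucv_aux hD0 hpT hqT hpqT
  have heq2 : (fun m => ‖p m - q m‖) = fun m => dist (z m) (z (m + 2)) := by
    funext m
    simp only [hp_def, hq_def, dist_eq_norm]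
    congr 1
    abel
  rw [heq2] at hfin
  exact hfin

/-- Theorem 3.3(ii), first part: in a uniformly convex Banach space with `A, B`
nonempty closed convex, under the strict cyclic contractive condition,
`d(T^{2n}x, T^{2n+2}x) → 0` and `d(T^{2n+1}x, T^{2n+3}x) → 0` for every
`x ∈ A ∪ B`. -/
theorem thm3_3_ii_first {X : Type*} [NormedAddCommGroup X] [NormedSpace ℝ X]
    [UniformConvexSpace X] [CompleteSpace X]
    (A B : Set X) (hA : A.Nonempty) (hB : B.Nonempty)
    (hAc : IsClosed A) (hBc : IsClosed B) (hAconv : Convex ℝ A) (hBconv : Convex ℝ B)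
    (T : X → X) (hTA : Set.MapsTo T A B) (hTB : Set.MapsTo T B A)
    (D : ℝ) (hD : D = sInf (Set.image2 dist A B))
    (k ε : ℕ → ℝ)
    (hk : ∀ n, 0 ≤ k n ∧ k n < 1) (hε : ∀ n, 0 ≤ ε n)
    (hke : Tendsto (fun n => ε n / (1 - k n)) atTop (nhds 0))
    (hineq : ∀ n x y, (x ∈ A ∧ y ∈ B) ∨ (x ∈ B ∧ y ∈ A) →
      dist (T^[n] x) (T^[n] y) ^ 2 ≤
        k n * dist x y ^ 2 + (1 - k n) * D ^ 2 + ε n) :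
    ∀ x ∈ A ∪ B,
      Tendsto (fun n => dist (T^[2 * n] x) (T^[2 * n + 2] x)) atTop (nhds 0) ∧
      Tendsto (fun n => dist (T^[2 * n + 1] x) (T^[2 * n + 3] x)) atTop (nhds 0) := by
  have hD0 : 0 ≤ D := by
    rw [hD]
    apply Real.sInf_nonneg
    rintro d ⟨a, ha, b, hb, rfl⟩
    exact dist_nonneg
  have hDle : ∀ a ∈ A, ∀ b ∈ B, D ≤ dist a b := by
    intro a ha b hb
    rw [hD]
    refine csInf_le ⟨0, ?_⟩ (Set.mem_image2_of_mem ha hb)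
    rintro d ⟨a', _, b', _, rfl⟩
    exact dist_nonneg
  have h2 : Tendsto (fun n : ℕ => 2 * n) atTop atTop :=
    tendsto_atTop_atTop_of_monotone (fun a b h => by omega) (fun b => ⟨b, by omega⟩)
  have h3 : Tendsto (fun n : ℕ => 2 * n + 1) atTop atTop :=
    tendsto_atTop_atTop_of_monotone (fun a b h => by omega) (fun b => ⟨b, by omega⟩)
  intro x hx
  have hidx : ∀ n : ℕ, 2 * n + 1 + 2 = 2 * n + 3 := fun n => by omega
  rcases hx with hxA | hxB
  · have main := main_aux A B hAconv hBconv T hTA hTB D hD0 hDle k ε hk hε hke hineq x hxA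
    refine ⟨(main.comp h2).congr fun n => rfl, (main.comp h3).congr fun n => ?_⟩
    simp only [Function.comp_apply, hidx n]
  · have hDle' : ∀ b ∈ B, ∀ a ∈ A, D ≤ dist b a := fun b hb a ha => by
      rw [dist_comm]; exact hDle a ha b hb
    have hineq' : ∀ n x y, (x ∈ B ∧ y ∈ A) ∨ (x ∈ A ∧ y ∈ B) →
        dist (T^[n] x) (T^[n] y) ^ 2 ≤
          k n * dist x y ^ 2 + (1 - k n) * D ^ 2 + ε n :=
      fun n x y h => hineq n x y h.symm
    have main := main_aux B A hBconv hAconv T hTB hTA D hD0 hDle' k ε hk hε hke hineq' x hxB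
    refine ⟨(main.comp h2).congr fun n => rfl, (main.comp h3).congr fun n => ?_⟩
    simp only [Function.comp_apply, hidx n]
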